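/- Under the setting of the minimax Lyapunov descent (W(x,y) = F(x) + (1/2)(F(x) − f(x,y)), flow ẋ = −∇_x f(x,y), ẏ = γ∇_y f(x,y), f(x,·) μ-strongly concave, ∇_x f L_{xy}-Lipschitz in y, F bounded below by F_inf), if γ > (5/4)(L_{xy}/μ)², then for t uniform on [0,T], E_t[‖y(t) − y*(x(t))‖²] ≤ (W(x(0),y(0)) − F_inf)/(μ² c_y(γ) T), where c_y(γ) := γ/2 − (5/8)(L_{xy}/μ)². -/

import Mathlib

open MeasureTheory
open scoped RealInnerProductSpace

lemma minimax_aux_bound {X Y : Type*} [NormedAddCommGroup X] [InnerProductSpace ℝ X]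
    [NormedAddCommGroup Y] [InnerProductSpace ℝ Y]
    (g u : X) (v : Y) (μ Lxy γ D : ℝ) (hμ : 0 < μ) (hγ0 : 0 ≤ γ) (hD0 : 0 ≤ D)
    (he : ‖u - g‖ ≤ Lxy * D) (hv : μ * D ≤ ‖v‖) :
    μ ^ 2 * (γ / 2 - 5 / 8 * (Lxy / μ) ^ 2) * D ^ 2
      ≤ -(3 / 2 * ⟪g, -u⟫ - 1 / 2 * (⟪u, -u⟫ + ⟪v, γ • v⟫)) := by
  have hB0 : (0:ℝ) ≤ ‖u - g‖ := norm_nonneg _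
  have hesq : ‖u - g‖ ^ 2 ≤ Lxy ^ 2 * D ^ 2 := by nlinarith
  have hvsq : μ ^ 2 * D ^ 2 ≤ ‖v‖ ^ 2 := by
    nlinarith [mul_le_mul hv hv (mul_nonneg hμ.le hD0) (norm_nonneg v)]
  have hCS : |⟪g, u - g⟫| ≤ ‖g‖ * ‖u - g‖ := abs_real_inner_le_norm _ _
  have hCS' : -(‖g‖ * ‖u - g‖) ≤ ⟪g, u - g⟫ := neg_le_of_abs_le hCS
  have hgu : ⟪g, u⟫ = ‖g‖ ^ 2 + ⟪g, u - g⟫ := by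
    have h : ⟪g, u - g⟫ = ⟪g, u⟫ - ⟪g, g⟫ := inner_sub_right _ _ _
    rw [real_inner_self_eq_norm_sq] at h
    linarith
  have huu : ‖u‖ ^ 2 = ‖g‖ ^ 2 + 2 * ⟪g, u - g⟫ + ‖u - g‖ ^ 2 := by
    have h := @norm_add_sq_real X _ _ g (u - g)
    simpa using h
  have hvv : ⟪v, γ • v⟫ = γ * ‖v‖ ^ 2 := by
    rw [real_inner_smul_right, real_inner_self_eq_norm_sq]
  have hgneg : ⟪g, -u⟫ = -⟪g, u⟫ := inner_neg_right _ _
  have huneg : ⟪u, -u⟫ = -(‖u‖ ^ 2) := by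
    rw [inner_neg_right, real_inner_self_eq_norm_sq]
  rw [hgneg, huneg, hvv, hgu, huu]
  have hcD : μ ^ 2 * (γ / 2 - 5 / 8 * (Lxy / μ) ^ 2) * D ^ 2
      = μ ^ 2 * (γ / 2) * D ^ 2 - 5 / 8 * Lxy ^ 2 * D ^ 2 := by
    field_simp
  rw [hcD]
  have hsq : 0 ≤ (‖g‖ - ‖u - g‖ / 2) ^ 2 := sq_nonneg _
  have hgnn : (0:ℝ) ≤ ‖g‖ := norm_nonneg _
  nlinarith [mul_le_mul_of_nonneg_left hvsq (by linarith : (0:ℝ) ≤ γ / 2)]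

/-- Minimax ergodic tracking (Corollary 4.2): under the minimax Lyapunov setting
with `F` bounded below by `F_inf` and `γ > (5/4)(L_{xy}/μ)²`, the time-average of
the tracking error satisfies
`(1/T)∫₀ᵀ ‖y(t) − y*(x(t))‖² dt ≤ (W(x(0),y(0)) − F_inf)/(μ² c_y(γ) T)`,
where `c_y(γ) = γ/2 − (5/8)(L_{xy}/μ)²`. -/
theorem minimax_ergodic_tracking
    {X Y : Type*} [NormedAddCommGroup X] [InnerProductSpace ℝ X] [CompleteSpace X]
    [NormedAddCommGroup Y] [InnerProductSpace ℝ Y]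
    (f : X → Y → ℝ) (Gxf : X → Y → X) (Gyf : X → Y → Y)
    (F : X → ℝ) (gradF : X → X) (ystar : X → Y)
    (μ Lxy γ Finf T : ℝ) (hμ : 0 < μ) (hT : 0 < T)
    (hconc : ∀ (x : X) (y y' : Y),
      f x y' ≤ f x y + ⟪Gyf x y, y' - y⟫ - μ / 2 * ‖y' - y‖ ^ 2)
    (hLip : ∀ (x : X) (y y' : Y), ‖Gxf x y - Gxf x y'‖ ≤ Lxy * ‖y - y'‖)
    (hystar : ∀ x : X, Gyf x (ystar x) = 0)
    (hF : ∀ x : X, F x = f x (ystar x))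
    (hgradF : ∀ x : X, HasGradientAt F (gradF x) x)
    (hgradF_eq : ∀ x : X, gradF x = Gxf x (ystar x))
    (hFinf : ∀ x : X, Finf ≤ F x)
    (xt : ℝ → X) (yt : ℝ → Y)
    (hxd : ∀ t : ℝ, HasDerivAt xt (-(Gxf (xt t) (yt t))) t)
    (hyd : ∀ t : ℝ, HasDerivAt yt (γ • Gyf (xt t) (yt t)) t)
    (hfchain : ∀ t : ℝ, HasDerivAt (fun s => f (xt s) (yt s))
      (⟪Gxf (xt t) (yt t), -(Gxf (xt t) (yt t))⟫
        + ⟪Gyf (xt t) (yt t), γ • Gyf (xt t) (yt t)⟫) t)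
    (hInt : IntervalIntegrable (fun t => ‖yt t - ystar (xt t)‖ ^ 2) volume 0 T)
    (hγ : γ > 5 / 4 * (Lxy / μ) ^ 2) :
    (1 / T) * ∫ t in (0:ℝ)..T, ‖yt t - ystar (xt t)‖ ^ 2
      ≤ ((F (xt 0) + 1 / 2 * (F (xt 0) - f (xt 0) (yt 0))) - Finf)
        / (μ ^ 2 * (γ / 2 - 5 / 8 * (Lxy / μ) ^ 2) * T) := by
  have hγ0 : 0 ≤ γ := by nlinarith [sq_nonneg (Lxy / μ)]
  set c : ℝ := μ ^ 2 * (γ / 2 - 5 / 8 * (Lxy / μ) ^ 2) with hc_def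
  have hc : 0 < c := by
    apply mul_pos (by positivity)
    nlinarith [sq_nonneg (Lxy / μ)]
  -- Lyapunov function
  set W : ℝ → ℝ := fun t => 3 / 2 * F (xt t) - 1 / 2 * f (xt t) (yt t) with hW_def
  set W' : ℝ → ℝ := fun t =>
    3 / 2 * ⟪gradF (xt t), -(Gxf (xt t) (yt t))⟫
      - 1 / 2 * (⟪Gxf (xt t) (yt t), -(Gxf (xt t) (yt t))⟫
        + ⟪Gyf (xt t) (yt t), γ • Gyf (xt t) (yt t)⟫) with hW'_def
  have hW : ∀ t : ℝ, HasDerivAt W (W' t) t := by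
    intro t
    have hFd : HasDerivAt (fun s => F (xt s))
        ⟪gradF (xt t), -(Gxf (xt t) (yt t))⟫ t := by
      have h := ((hgradF (xt t)).hasFDerivAt.comp_hasDerivAt t (hxd t))
      simpa [InnerProductSpace.toDual_apply_apply, Function.comp_def] using h
    exact (hFd.const_mul (3 / 2)).sub ((hfchain t).const_mul (1 / 2))
  -- strong concavity facts
  have htrack : ∀ t : ℝ, μ * ‖yt t - ystar (xt t)‖ ≤ ‖Gyf (xt t) (yt t)‖ := by
    intro t
    set x := xt t; set y := yt t; set v := Gyf x y
    have h1 := hconc x y (ystar x)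
    have h2 := hconc x (ystar x) y
    rw [hystar x] at h2
    simp only [inner_zero_left] at h2
    have hD : ‖ystar x - y‖ = ‖y - ystar x‖ := norm_sub_rev _ _
    have hCS : ⟪v, ystar x - y⟫ ≤ ‖v‖ * ‖ystar x - y‖ := real_inner_le_norm _ _
    rw [hD] at hCS h1
    have key : μ * ‖y - ystar x‖ ^ 2 ≤ ‖v‖ * ‖y - ystar x‖ := by nlinarith
    rcases eq_or_lt_of_le (norm_nonneg (y - ystar x)) with h0 | h0
    · rw [← h0]; simp [norm_nonneg]
    · nlinarith
  have hfleF : ∀ (x : X) (y : Y), f x y ≤ F x := by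
    intro x y
    have h := hconc x (ystar x) y
    rw [hystar x] at h
    simp only [inner_zero_left] at h
    rw [hF x]
    nlinarith [sq_nonneg ‖y - ystar x‖]
  -- pointwise dissipation bound
  have hbound : ∀ t : ℝ, c * ‖yt t - ystar (xt t)‖ ^ 2 ≤ -(W' t) := by
    intro t
    have he : ‖Gxf (xt t) (yt t) - gradF (xt t)‖ ≤ Lxy * ‖yt t - ystar (xt t)‖ := by
      rw [hgradF_eq]
      exact hLip (xt t) (yt t) (ystar (xt t))
    have h := minimax_aux_bound (gradF (xt t)) (Gxf (xt t) (yt t)) (Gyf (xt t) (yt t))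
      μ Lxy γ (‖yt t - ystar (xt t)‖) hμ hγ0 (norm_nonneg _) he (htrack t)
    calc c * ‖yt t - ystar (xt t)‖ ^ 2 ≤ _ := h
      _ = -(W' t) := by rw [hW'_def]
  -- integrate the dissipation
  have hφint : IntegrableOn (fun t => c * ‖yt t - ystar (xt t)‖ ^ 2) (Set.Icc 0 T) volume := by
    have h := (intervalIntegrable_iff_integrableOn_Icc_of_le hT.le).1 hInt
    exact h.const_mul c
  have hkey : (∫ t in (0:ℝ)..T, c * ‖yt t - ystar (xt t)‖ ^ 2)
      ≤ (fun t => -(W t)) T - (fun t => -(W t)) 0 := by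
    apply intervalIntegral.integral_le_sub_of_hasDeriv_right_of_le hT.le
    · exact fun t _ => ((hW t).neg.continuousAt).continuousWithinAt
    · exact fun t _ => ((hW t).neg).hasDerivWithinAt
    · exact hφint
    · exact fun t _ => hbound t
  have hkey2 : c * (∫ t in (0:ℝ)..T, ‖yt t - ystar (xt t)‖ ^ 2) ≤ W 0 - W T := by
    have h2 : (∫ t in (0:ℝ)..T, c * ‖yt t - ystar (xt t)‖ ^ 2) ≤ -(W T) - -(W 0) := hkey
    rw [intervalIntegral.integral_const_mul] at h2
    linarith
  clear_value c W W'
  have hWT : Finf ≤ W T := by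
    have h1 := hfleF (xt T) (yt T)
    have h2 := hFinf (xt T)
    simp only [hW_def]
    linarith
  have hmain : c * (∫ t in (0:ℝ)..T, ‖yt t - ystar (xt t)‖ ^ 2)
      ≤ (F (xt 0) + 1 / 2 * (F (xt 0) - f (xt 0) (yt 0))) - Finf := by
    have hW0 : W 0 = F (xt 0) + 1 / 2 * (F (xt 0) - f (xt 0) (yt 0)) := by
      simp only [hW_def]; ring
    linarith
  have hcT : 0 < c * T := mul_pos hc hT
  rw [le_div_iff₀ hcT]
  calc 1 / T * (∫ t in (0:ℝ)..T, ‖yt t - ystar (xt t)‖ ^ 2) * (c * T)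
      = c * (∫ t in (0:ℝ)..T, ‖yt t - ystar (xt t)‖ ^ 2) := by
        field_simp
    _ ≤ _ := hmain
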